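/- Let C and D be Z-type complexes over 𝔽₂, let V be a common separated logical operator subcomplex of C (determined by u) and of D (determined by v), and let Q be the Z̄-merged complex. Then the cosystolic distance of the merged code satisfies d^X(Q) ≥ min(d^X(C), d^X(D)). -/

import Mathlib

/-!
STATEMENT 8: For a separated Z̄-merge of Z-type complexes C and D along a
common logical operator subcomplex V, the cosystolic distance of the merged
code satisfies d^X(Q) ≥ min(d^X(C), d^X(D)): every X-logical of Q has Hamming
weight (in the canonical glued basis of Q₀) at least that of some X-logical
of C or of D.
-/

abbrev F2 := ZMod 2

/-- Coordinate inclusion of 𝔽₂^α into 𝔽₂^β along an embedding ι : α ↪ β. -/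
noncomputable def incl {α β : Type} [Fintype α] [DecidableEq β] (ι : α ↪ β) :
    (α → F2) →ₗ[F2] (β → F2) :=
  Matrix.mulVecLin (Matrix.of fun j i => if j = ι i then 1 else 0)

/-- Pushforward of 𝔽₂-valued functions along a map of index sets. -/
noncomputable def pushf {α β : Type} [Fintype α] [DecidableEq β] (p : α → β) :
    (α → F2) →ₗ[F2] (β → F2) :=
  Matrix.mulVecLin (Matrix.of fun q j => if p j = q then 1 else 0)

/-- Hamming weight of a vector in 𝔽₂^α. -/
def wtv {α : Type} [Fintype α] (y : α → F2) : ℕ :=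
  (Finset.univ.filter fun j => y j ≠ 0).card

/-- Standard 𝔽₂ dot product. -/
def dotP {α : Type} [Fintype α] (x y : α → F2) : F2 := ∑ j, x j * y j

/-- The glued index set of the merged code: the qubits of C together with the
qubits of D not in the support of v. -/
abbrev MergedIdx {SD0 T0 : Type} (SC0 : Type) (ιD : T0 ↪ SD0) : Type :=
  SC0 ⊕ {j : SD0 // j ∉ Set.range ιD}

noncomputable instance {SD0 T0 : Type} [Fintype SD0] (ιD : T0 ↪ SD0) :
    Fintype {j : SD0 // j ∉ Set.range ιD} := Fintype.ofFinite _

open Classical in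
/-- The identification of the qubits of D with glued qubits: a qubit in the
support of v is sent to the corresponding qubit in the support of u. -/
noncomputable def glueD {SC0 SD0 T0 : Type} (ιC : T0 ↪ SC0) (ιD : T0 ↪ SD0)
    (j : SD0) : MergedIdx SC0 ιD :=
  if h : j ∈ Set.range ιD then Sum.inl (ιC (Set.mem_range.mp h).choose)
  else Sum.inr ⟨j, h⟩

/-- The coequalizer map (C₀ ⊕ D₀) → Q₀ realizing the merged qubit space
concretely on the glued index set. -/
noncomputable def mergeCoeq0 {SC0 SD0 T0 : Type} [Fintype SC0] [Fintype SD0] [Fintype T0]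
    [DecidableEq SC0] [DecidableEq SD0]
    (ιC : T0 ↪ SC0) (ιD : T0 ↪ SD0) :
    ((SC0 → F2) × (SD0 → F2)) →ₗ[F2] (MergedIdx SC0 ιD → F2) :=
  (pushf (Sum.inl : SC0 → MergedIdx SC0 ιD) ∘ₗ LinearMap.fst F2 (SC0 → F2) (SD0 → F2)) +
  (pushf (glueD ιC ιD) ∘ₗ LinearMap.snd F2 (SC0 → F2) (SD0 → F2))


section Aux

lemma dot_pushf {α β : Type} [Fintype α] [Fintype β] [DecidableEq β]
    (p : α → β) (a : α → F2) (y : β → F2) :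
    dotP (pushf p a) y = dotP a (fun j => y (p j)) := by
  simp only [dotP, pushf, Matrix.mulVecLin_apply, Matrix.mulVec, dotProduct,
    Matrix.of_apply, Finset.sum_mul]
  rw [Finset.sum_comm]
  simp [ite_mul, Finset.sum_ite_eq, mul_comm]

lemma dot_incl {α β : Type} [Fintype α] [Fintype β] [DecidableEq β]
    (ι : α ↪ β) (s : α → F2) (w : β → F2) :
    dotP (incl ι s) w = dotP s (fun t => w (ι t)) := by
  simp only [dotP, incl, Matrix.mulVecLin_apply, Matrix.mulVec, dotProduct,
    Matrix.of_apply, Finset.sum_mul]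
  rw [Finset.sum_comm]
  simp [ite_mul, Finset.sum_ite_eq', mul_comm]

lemma dot_add_left {α : Type} [Fintype α] (x x' y : α → F2) :
    dotP (x + x') y = dotP x y + dotP x' y := by
  simp [dotP, add_mul, Finset.sum_add_distrib]

lemma dot_zero_left {α : Type} [Fintype α] (y : α → F2) : dotP 0 y = 0 := by
  simp [dotP]

lemma wtv_comp_le {α β : Type} [Fintype α] [Fintype β] (p : α → β)
    (hp : Function.Injective p) (y : β → F2) :
    wtv (fun j => y (p j)) ≤ wtv y := by
  classical
  apply Finset.card_le_card_of_injOn p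
  · intro j hj
    simp only [Finset.mem_coe, Finset.mem_filter, Finset.mem_univ, true_and] at hj ⊢
    exact hj
  · intro a _ b _ h; exact hp h

lemma glueD_not_mem {SC0 SD0 T0 : Type} (ιC : T0 ↪ SC0) (ιD : T0 ↪ SD0)
    {j : SD0} (h : j ∉ Set.range ιD) : glueD ιC ιD j = Sum.inr ⟨j, h⟩ := by
  rw [glueD, dif_neg h]

lemma glueD_apply_iD {SC0 SD0 T0 : Type} (ιC : T0 ↪ SC0) (ιD : T0 ↪ SD0)
    (t : T0) : glueD ιC ιD (ιD t) = Sum.inl (ιC t) := by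
  have h : ιD t ∈ Set.range ιD := ⟨t, rfl⟩
  rw [glueD, dif_pos h]
  congr 1
  exact congrArg ιC (ιD.injective (Set.mem_range.mp h).choose_spec)

lemma glueD_injective {SC0 SD0 T0 : Type} (ιC : T0 ↪ SC0) (ιD : T0 ↪ SD0) :
    Function.Injective (glueD ιC ιD) := by
  intro j j' h
  by_cases h1 : j ∈ Set.range ιD <;> by_cases h2 : j' ∈ Set.range ιD
  · obtain ⟨t, ht⟩ := h1
    obtain ⟨t', ht'⟩ := h2
    subst ht ht'
    rw [glueD_apply_iD, glueD_apply_iD] at h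
    exact congrArg ιD (ιC.injective (Sum.inl.inj h))
  · rw [glueD_not_mem ιC ιD h2] at h
    rw [glueD, dif_pos h1] at h
    exact absurd h (by simp)
  · rw [glueD_not_mem ιC ιD h1] at h
    rw [glueD, dif_pos h2] at h
    exact absurd h (by simp)
  · rw [glueD_not_mem ιC ιD h1, glueD_not_mem ιC ιD h2] at h
    simpa using h

lemma merge_dot {SC0 SD0 T0 : Type} [Fintype SC0] [Fintype SD0] [Fintype T0]
    [DecidableEq SC0] [DecidableEq SD0]
    (ιC : T0 ↪ SC0) (ιD : T0 ↪ SD0) (a : SC0 → F2) (b : SD0 → F2)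
    (y : MergedIdx SC0 ιD → F2) :
    dotP (mergeCoeq0 ιC ιD (a, b)) y =
      dotP a (fun i => y (Sum.inl i)) + dotP b (fun j => y (glueD ιC ιD j)) := by
  classical
  simp only [mergeCoeq0, LinearMap.add_apply, LinearMap.coe_comp, Function.comp_apply,
    LinearMap.fst_apply, LinearMap.snd_apply]
  rw [dot_add_left, dot_pushf, dot_pushf]

lemma merge_surj {SC0 SD0 T0 : Type} [Fintype SC0] [Fintype SD0] [Fintype T0]
    [DecidableEq SC0] [DecidableEq SD0]
    (ιC : T0 ↪ SC0) (ιD : T0 ↪ SD0) (z : MergedIdx SC0 ιD → F2) :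
    ∃ a b, mergeCoeq0 ιC ιD (a, b) = z := by
  classical
  refine ⟨fun i => z (Sum.inl i),
    fun j => if h : j ∈ Set.range ιD then 0 else z (Sum.inr ⟨j, h⟩), ?_⟩
  funext q
  simp only [mergeCoeq0, LinearMap.add_apply, LinearMap.coe_comp, Function.comp_apply,
    LinearMap.fst_apply, LinearMap.snd_apply, pushf, Matrix.mulVecLin_apply,
    Matrix.mulVec, dotProduct, Matrix.of_apply, Pi.add_apply]
  cases q with
  | inl i =>
    have h1 : (∑ j : SC0, (if (Sum.inl j : MergedIdx SC0 ιD) = Sum.inl i then (1:F2) else 0)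
        * z (Sum.inl j)) = z (Sum.inl i) := by
      simp [ite_mul, Finset.sum_ite_eq']
    have h2 : (∑ j : SD0, (if glueD ιC ιD j = Sum.inl i then (1:F2) else 0)
        * (if h : j ∈ Set.range ιD then 0 else z (Sum.inr ⟨j, h⟩))) = 0 := by
      apply Finset.sum_eq_zero
      intro j _
      by_cases h : j ∈ Set.range ιD
      · simp [h]
      · rw [glueD_not_mem ιC ιD h]
        simp [h]
    rw [h1, h2, add_zero]
  | inr jh =>
    obtain ⟨j0, h0⟩ := jh
    have h1 : (∑ j : SC0, (if (Sum.inl j : MergedIdx SC0 ιD) = Sum.inr ⟨j0, h0⟩ then (1:F2) else 0)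
        * z (Sum.inl j)) = 0 := by
      apply Finset.sum_eq_zero
      intro j _
      simp
    have h2 : (∑ j : SD0, (if glueD ιC ιD j = Sum.inr ⟨j0, h0⟩ then (1:F2) else 0)
        * (if h : j ∈ Set.range ιD then 0 else z (Sum.inr ⟨j, h⟩))) = z (Sum.inr ⟨j0, h0⟩) := by
      rw [Finset.sum_eq_single j0]
      · rw [glueD_not_mem ιC ιD h0]
        simp [h0]
      · intro j _ hne
        by_cases h : j ∈ Set.range ιD
        · simp [h]
        · rw [glueD_not_mem ιC ιD h]
          have : ¬ ((Sum.inr ⟨j, h⟩ : MergedIdx SC0 ιD) = Sum.inr ⟨j0, h0⟩) := by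
            simp [hne]
          simp [this]
      · intro habs
        exact absurd (Finset.mem_univ j0) habs
    rw [h1, h2, zero_add]

end Aux

theorem separated_Zbar_merge_cosystolic_distance
    {SC1 SC0 SCm SD1 SD0 SDm T0 : Type}
    [Fintype SC1] [Fintype SC0] [Fintype SCm]
    [Fintype SD1] [Fintype SD0] [Fintype SDm] [Fintype T0]
    [DecidableEq SC0] [DecidableEq SD0] [DecidableEq SCm] [DecidableEq SDm] [DecidableEq T0]
    (dC0 : (SC1 → F2) →ₗ[F2] (SC0 → F2)) (dCm : (SC0 → F2) →ₗ[F2] (SCm → F2))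
    (dD0 : (SD1 → F2) →ₗ[F2] (SD0 → F2)) (dDm : (SD0 → F2) →ₗ[F2] (SDm → F2))
    (hC : dCm ∘ₗ dC0 = 0) (hD : dDm ∘ₗ dD0 = 0)
    (ιC : T0 ↪ SC0) (ιD : T0 ↪ SD0)
    (hu : incl ιC 1 ∈ LinearMap.ker dCm) (hu' : incl ιC 1 ∉ LinearMap.range dC0)
    (hv : incl ιD 1 ∈ LinearMap.ker dDm) (hv' : incl ιD 1 ∉ LinearMap.range dD0)
    (hcommon : ∀ s : T0 → F2, dCm (incl ιC s) = 0 ↔ dDm (incl ιD s) = 0)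
    (hsepC : ∀ u' : SC0 → F2, u' ∈ LinearMap.ker dCm → u' ∉ LinearMap.range dC0 →
      (∀ j, u' j ≠ 0 → incl ιC 1 j ≠ 0) → u' + incl ιC 1 ∈ LinearMap.range dC0)
    (hsepD : ∀ v' : SD0 → F2, v' ∈ LinearMap.ker dDm → v' ∉ LinearMap.range dD0 →
      (∀ j, v' j ≠ 0 → incl ιD 1 j ≠ 0) → v' + incl ιD 1 ∈ LinearMap.range dD0)
    (hsep3 : ∀ s : T0 → F2,
      (incl ιC s ∈ LinearMap.ker dCm ∧ incl ιC s ∉ LinearMap.range dC0) ↔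
      (incl ιD s ∈ LinearMap.ker dDm ∧ incl ιD s ∉ LinearMap.range dD0))
    -- the induced differential ∂₋₁^Q on the concretely realized Q₀
    (dQm : (MergedIdx SC0 ιD → F2) →ₗ[F2]
      (((SCm → F2) × (SDm → F2)) ⧸
        LinearMap.range ((dCm ∘ₗ incl ιC).prod (dDm ∘ₗ incl ιD))))
    (hdQm : dQm ∘ₗ mergeCoeq0 ιC ιD =
      (LinearMap.range ((dCm ∘ₗ incl ιC).prod (dDm ∘ₗ incl ιD))).mkQ ∘ₗ
        (dCm.prodMap dDm)) :
    -- d^X(Q) ≥ min (d^X(C), d^X(D))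
    ∀ y : MergedIdx SC0 ιD → F2,
      -- y is an X-cocycle of Q ...
      (∀ x : (SC1 → F2) × (SD1 → F2),
        dotP (mergeCoeq0 ιC ιD ((dC0.prodMap dD0) x)) y = 0) →
      -- ... which is not an X-coboundary of Q
      (¬ ∃ ψ : (((SCm → F2) × (SDm → F2)) ⧸
            LinearMap.range ((dCm ∘ₗ incl ιC).prod (dDm ∘ₗ incl ιD))) →ₗ[F2] F2,
          ∀ z : MergedIdx SC0 ιD → F2, dotP z y = ψ (dQm z)) →
      -- ... dominates in weight some X-logical of C or of D
      (∃ z : SC0 → F2,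
        ((∀ x : SC1 → F2, dotP (dC0 x) z = 0) ∧
          ¬ ∃ ψ : (SCm → F2) →ₗ[F2] F2, ∀ w : SC0 → F2, dotP w z = ψ (dCm w)) ∧
        wtv z ≤ wtv y) ∨
      (∃ z : SD0 → F2,
        ((∀ x : SD1 → F2, dotP (dD0 x) z = 0) ∧
          ¬ ∃ ψ : (SDm → F2) →ₗ[F2] F2, ∀ w : SD0 → F2, dotP w z = ψ (dDm w)) ∧
        wtv z ≤ wtv y) := by
  classical
  intro y hcoc hncob
  set yC : SC0 → F2 := fun i => y (Sum.inl i) with hyCdef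
  set yD : SD0 → F2 := fun j => y (glueD ιC ιD j) with hyDdef
  -- yC is a cocycle of C
  have hyC : ∀ x1 : SC1 → F2, dotP (dC0 x1) yC = 0 := by
    intro x1
    have h := hcoc (x1, 0)
    rw [show (dC0.prodMap dD0) (x1, 0) = (dC0 x1, 0) by simp [LinearMap.prodMap_apply]] at h
    rw [merge_dot] at h
    rw [dot_zero_left, add_zero] at h
    exact h
  -- yD is a cocycle of D
  have hyD : ∀ x2 : SD1 → F2, dotP (dD0 x2) yD = 0 := by
    intro x2
    have h := hcoc (0, x2)
    rw [show (dC0.prodMap dD0) (0, x2) = (0, dD0 x2) by simp [LinearMap.prodMap_apply]] at h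
    rw [merge_dot] at h
    rw [dot_zero_left, zero_add] at h
    exact h
  -- weight bounds
  have hwC : wtv yC ≤ wtv y := wtv_comp_le Sum.inl Sum.inl_injective y
  have hwD : wtv yD ≤ wtv y := wtv_comp_le (glueD ιC ιD) (glueD_injective ιC ιD) y
  -- if both restrictions were coboundaries, y would be a Q-coboundary
  by_cases hCb : ∃ ψC : (SCm → F2) →ₗ[F2] F2, ∀ w : SC0 → F2, dotP w yC = ψC (dCm w)
  · by_cases hDb : ∃ ψD : (SDm → F2) →ₗ[F2] F2, ∀ w : SD0 → F2, dotP w yD = ψD (dDm w)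
    · exfalso
      apply hncob
      obtain ⟨ψC, hψC⟩ := hCb
      obtain ⟨ψD, hψD⟩ := hDb
      set φ : ((SCm → F2) × (SDm → F2)) →ₗ[F2] F2 :=
        (ψC ∘ₗ LinearMap.fst F2 (SCm → F2) (SDm → F2)) +
        (ψD ∘ₗ LinearMap.snd F2 (SCm → F2) (SDm → F2)) with hφdef
      have hle : LinearMap.range ((dCm ∘ₗ incl ιC).prod (dDm ∘ₗ incl ιD)) ≤
          LinearMap.ker φ := by
        rintro x ⟨s, rfl⟩
        simp only [LinearMap.mem_ker, hφdef, LinearMap.add_apply, LinearMap.coe_comp,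
          Function.comp_apply, LinearMap.fst_apply, LinearMap.snd_apply,
          LinearMap.prod_apply, Function.prod]
        rw [← hψC, ← hψD, dot_incl, dot_incl]
        have heq : (fun t => yD (ιD t)) = (fun t => yC (ιC t)) := by
          funext t
          simp only [hyCdef, hyDdef]
          rw [glueD_apply_iD]
        rw [heq]
        have h2 : ∀ x : F2, x + x = 0 := by decide
        exact h2 _
      refine ⟨Submodule.liftQ _ φ hle, fun z => ?_⟩
      obtain ⟨a, b, rfl⟩ := merge_surj ιC ιD z
      rw [merge_dot]
      have hz := LinearMap.congr_fun hdQm (a, b)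
      simp only [LinearMap.coe_comp, Function.comp_apply] at hz
      rw [hz]
      rw [show (dCm.prodMap dDm) (a, b) = (dCm a, dDm b) by simp [LinearMap.prodMap_apply]]
      rw [Submodule.mkQ_apply, Submodule.liftQ_apply]
      simp only [hφdef, LinearMap.add_apply, LinearMap.coe_comp, Function.comp_apply,
        LinearMap.fst_apply, LinearMap.snd_apply]
      rw [← hψC, ← hψD]
    · exact Or.inr ⟨yD, ⟨hyD, hDb⟩, hwD⟩
  · exact Or.inl ⟨yC, ⟨hyC, hCb⟩, hwC⟩
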